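/- Let n, m, N, q be natural numbers with m ≤ n, 1 ≤ N ≤ 2^m, and N + q ≤ 2^n. Let Y be a finite type with exactly 2^m elements and T : GF(2^n) → Y a balanced function (every fiber has exactly 2^{n−m} elements). Let x₁, …, x_{N+q} be N+q distinct elements of GF(2^n), where x₁, …, x_N are the stored items and x_{N+1}, …, x_{N+q} are the queried items. If db is sampled uniformly at random from GF(2^n)^{N+q}, then the probability that there exists an index i ∈ {1, …, q} with T(p_db(x_{N+i})) ∈ {T(p_db(x₁)), …, T(p_db(x_N))} is at most 1 − (1 − N/2^m)^q. (This is the core probabilistic content of the collision-security theorem for the polynomial recognizer: any fixed set of q phishing queries disjoint from the stored set produces a wrongly recognized item with probability at most 1 − (1 − N/2^m)^q.) -/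

import Mathlib

open Finset
open scoped ENNReal

lemma count_aux {K : Type*} [Fintype K] {Y : Type} [Fintype Y] (T : K → Y) (N q D : ℕ)
    (hfib : ∀ a : Fin N → K, Nat.card {z : K // ∃ l, T z = T (a l)} ≤ D) :
    Fintype.card K ^ N * (Fintype.card K - D) ^ q ≤
      Nat.card {p : (Fin N → K) × (Fin q → K) // ∀ i l, T (p.2 i) ≠ T (p.1 l)} := by
  classical
  rw [Nat.card_congr (Equiv.subtypeProdEquivSigmaSubtype
        (fun (a : Fin N → K) (b : Fin q → K) => ∀ i l, T (b i) ≠ T (a l)))]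
  rw [Nat.card_eq_fintype_card, Fintype.card_sigma]
  have key : ∀ a : Fin N → K,
      (Fintype.card K - D) ^ q ≤ Fintype.card {b : Fin q → K // ∀ i l, T (b i) ≠ T (a l)} := by
    intro a
    have e1 : {b : Fin q → K // ∀ i l, T (b i) ≠ T (a l)} ≃
        ∀ _ : Fin q, {z : K // ∀ l, T z ≠ T (a l)} := Equiv.subtypePiEquivPi (p := fun _ z => ∀ l, T z ≠ T (a l))
    rw [Fintype.card_congr e1, Fintype.card_pi, Finset.prod_const, Finset.card_univ,
      Fintype.card_fin]
    apply Nat.pow_le_pow_left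
    have e2 : Fintype.card {z : K // ∀ l, T z ≠ T (a l)} =
        Fintype.card K - Fintype.card {z : K // ∃ l, T z = T (a l)} := by
      rw [← Fintype.card_subtype_compl]
      apply Fintype.card_congr
      exact Equiv.subtypeEquivRight (by intro z; simp)
    rw [e2]
    exact Nat.sub_le_sub_left (by rw [← Nat.card_eq_fintype_card]; exact hfib a) _
  calc Fintype.card K ^ N * (Fintype.card K - D) ^ q
      = ∑ _a : Fin N → K, (Fintype.card K - D) ^ q := by
        rw [Finset.sum_const, Finset.card_univ, Fintype.card_pi]
        simp [mul_comm]
    _ ≤ ∑ a : Fin N → K, Fintype.card {b : Fin q → K // ∀ i l, T (b i) ≠ T (a l)} :=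
        Finset.sum_le_sum fun a _ => key a

lemma fib_bound {K : Type*} [Fintype K] {Y : Type} (T : K → Y) (F : ℕ)
    (hT : ∀ y, Nat.card {z : K // T z = y} = F) (N : ℕ) (a : Fin N → K) :
    Nat.card {z : K // ∃ l, T z = T (a l)} ≤ N * F := by
  classical
  rw [Nat.card_eq_fintype_card, Fintype.card_subtype]
  have hsub : (Finset.univ.filter fun z => ∃ l, T z = T (a l)) ⊆
      Finset.univ.biUnion fun l : Fin N => Finset.univ.filter fun z => T z = T (a l) := by
    intro z hz
    simp only [Finset.mem_filter, Finset.mem_univ, true_and] at hz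
    obtain ⟨l, hl⟩ := hz
    simp only [Finset.mem_biUnion, Finset.mem_filter, Finset.mem_univ, true_and]
    exact ⟨l, hl⟩
  calc (Finset.univ.filter fun z => ∃ l, T z = T (a l)).card
      ≤ (Finset.univ.biUnion fun l : Fin N =>
          Finset.univ.filter fun z => T z = T (a l)).card := Finset.card_le_card hsub
    _ ≤ ∑ l : Fin N, (Finset.univ.filter fun z => T z = T (a l)).card :=
        Finset.card_biUnion_le
    _ = ∑ l : Fin N, F := by
        refine Finset.sum_congr rfl fun l _ => ?_
        rw [← Fintype.card_subtype, ← Nat.card_eq_fintype_card, hT]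
    _ = N * F := by simp [mul_comm]

lemma vand_equiv {K : Type*} [Field K] {k : ℕ} (x : Fin k → K) (hx : Function.Injective x) :
    ∃ e : (Fin k → K) ≃ (Fin k → K),
      ∀ db i, e db i = ∑ j : Fin k, db j * x i ^ (j : ℕ) := by
  set V := Matrix.vandermonde x with hV
  have hdet : V.det ≠ 0 := by
    rw [hV, Matrix.det_vandermonde]
    refine Finset.prod_ne_zero_iff.2 fun i _ => Finset.prod_ne_zero_iff.2 fun j hj => ?_
    rw [Finset.mem_Ioi] at hj
    exact sub_ne_zero.2 fun h => (ne_of_gt hj) (hx h.symm).symm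
  have hunit : IsUnit V.det := isUnit_iff_ne_zero.2 hdet
  refine ⟨⟨V.mulVec, V⁻¹.mulVec, fun v => ?_, fun v => ?_⟩, fun db i => ?_⟩
  · rw [Matrix.mulVec_mulVec, Matrix.nonsing_inv_mul V hunit, Matrix.one_mulVec]
  · rw [Matrix.mulVec_mulVec, Matrix.mul_nonsing_inv V hunit, Matrix.one_mulVec]
  · simp only [Equiv.coe_fn_mk, Matrix.mulVec, dotProduct, hV, Matrix.vandermonde]
    exact Finset.sum_congr rfl fun j _ => mul_comm _ _

lemma Sprime_bound {K : Type*} [Fintype K] {Y : Type} [Fintype Y] (T : K → Y) (N q F : ℕ)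
    (hT : ∀ y, Nat.card {z : K // T z = y} = F) :
    Nat.card ↥{v : Fin (N + q) → K | ∃ i : Fin q, ∃ l : Fin N,
        T (v (Fin.natAdd N i)) = T (v (Fin.castAdd q l))}
      ≤ Fintype.card K ^ (N + q) -
        Fintype.card K ^ N * (Fintype.card K - N * F) ^ q := by
  classical
  set c := Fintype.card K
  set S : Set (Fin (N + q) → K) := {v | ∃ i : Fin q, ∃ l : Fin N,
      T (v (Fin.natAdd N i)) = T (v (Fin.castAdd q l))} with hSdef
  have htot : S.ncard + Sᶜ.ncard = c ^ (N + q) := by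
    rw [Set.ncard_add_ncard_compl, Nat.card_eq_fintype_card, Fintype.card_fun,
      Fintype.card_fin]
  have hcompl : c ^ N * (c - N * F) ^ q ≤ Sᶜ.ncard := by
    let Φ : ((Fin N → K) × (Fin q → K)) ≃ (Fin (N + q) → K) :=
      (Equiv.sumArrowEquivProdArrow (Fin N) (Fin q) K).symm.trans
        (Equiv.arrowCongr finSumFinEquiv (Equiv.refl K))
    have hΦ1 : ∀ (p : (Fin N → K) × (Fin q → K)) (l : Fin N),
        Φ p (Fin.castAdd q l) = p.1 l := by
      intro p l
      simp [Φ, Equiv.sumArrowEquivProdArrow, Equiv.arrowCongr,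
        finSumFinEquiv_symm_apply_castAdd]
    have hΦ2 : ∀ (p : (Fin N → K) × (Fin q → K)) (i : Fin q),
        Φ p (Fin.natAdd N i) = p.2 i := by
      intro p i
      simp [Φ, Equiv.sumArrowEquivProdArrow, Equiv.arrowCongr,
        finSumFinEquiv_symm_apply_natAdd]
    have e : {p : (Fin N → K) × (Fin q → K) // ∀ i l, T (p.2 i) ≠ T (p.1 l)} ≃ ↥(Sᶜ) := by
      refine Φ.subtypeEquiv fun p => ?_
      simp only [Set.mem_compl_iff, hSdef, Set.mem_setOf_eq, not_exists, hΦ1, hΦ2]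
    rw [← Nat.card_coe_set_eq, ← Nat.card_congr e]
    exact count_aux T N q (N * F) (fun a => fib_bound T F hT N a)
  have h1 : Nat.card ↑S = S.ncard := Nat.card_coe_set_eq S
  rw [h1]
  omega

lemma enn_div_sub (a b : ℕ) (hb : b ≤ a) (ha : a ≠ 0) :
    ((a - b : ℕ) : ℝ≥0∞) / a = 1 - (b : ℝ≥0∞) / a := by
  have ha' : (a : ℝ≥0∞) ≠ 0 := by exact_mod_cast ha
  have ha'' : (a : ℝ≥0∞) ≠ ⊤ := ENNReal.natCast_ne_top a
  rw [ENNReal.natCast_sub a b, ENNReal.sub_div (fun _ _ => ha'), ENNReal.div_self ha' ha'']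

lemma enn_frac (b k a : ℕ) (hk : k ≠ 0) :
    ((b * k : ℕ) : ℝ≥0∞) / ((a * k : ℕ) : ℝ≥0∞) = (b : ℝ≥0∞) / a := by
  push_cast
  exact ENNReal.mul_div_mul_right _ _ (by exact_mod_cast hk) (ENNReal.natCast_ne_top k)

theorem stmt_10 (n m N q : ℕ) (hmn : m ≤ n) (hN1 : 1 ≤ N) (hN2 : N ≤ 2 ^ m)
    (hNq : N + q ≤ 2 ^ n)
    (Y : Type) [Fintype Y] (hY : Fintype.card Y = 2 ^ m)
    (T : GaloisField 2 n → Y)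
    (hT : ∀ y : Y, Nat.card {z : GaloisField 2 n // T z = y} = 2 ^ (n - m))
    (x : Fin (N + q) → GaloisField 2 n) (hx : Function.Injective x) :
    letI : Fintype (GaloisField 2 n) := Fintype.ofFinite _
    (PMF.uniformOfFintype (Fin (N + q) → GaloisField 2 n)).toOuterMeasure
        {db | ∃ i : Fin q, ∃ l : Fin N,
          T (∑ j : Fin (N + q), db j * x (Fin.natAdd N i) ^ (j : ℕ))
            = T (∑ j : Fin (N + q), db j * x (Fin.castAdd q l) ^ (j : ℕ))}
      ≤ 1 - (1 - (N : ENNReal) / 2 ^ m) ^ q := by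
  letI : Fintype (GaloisField 2 n) := Fintype.ofFinite _
  rcases Nat.eq_zero_or_pos q with hq0 | hq0
  · subst hq0
    have hempty : {db : Fin (N + 0) → GaloisField 2 n | ∃ i : Fin 0, ∃ l : Fin N,
        T (∑ j : Fin (N + 0), db j * x (Fin.natAdd N i) ^ (j : ℕ))
          = T (∑ j : Fin (N + 0), db j * x (Fin.castAdd 0 l) ^ (j : ℕ))} = ∅ := by
      ext db; simp
    rw [hempty]
    simp
  have hn : n ≠ 0 := by
    intro h; subst h; simp at hNq; omega
  have hcardK : Fintype.card (GaloisField 2 n) = 2 ^ n := by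
    rw [← Nat.card_eq_fintype_card]; exact GaloisField.card 2 n hn
  obtain ⟨e, he⟩ := vand_equiv x hx
  set S' : Set (Fin (N + q) → GaloisField 2 n) := {v | ∃ i : Fin q, ∃ l : Fin N,
      T (v (Fin.natAdd N i)) = T (v (Fin.castAdd q l))} with hS'def
  have hset : {db : Fin (N + q) → GaloisField 2 n | ∃ i : Fin q, ∃ l : Fin N,
      T (∑ j : Fin (N + q), db j * x (Fin.natAdd N i) ^ (j : ℕ))
        = T (∑ j : Fin (N + q), db j * x (Fin.castAdd q l) ^ (j : ℕ))} = ⇑e ⁻¹' S' := by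
    ext db
    simp only [Set.mem_setOf_eq, Set.mem_preimage, hS'def, he]
  classical
  rw [hset, PMF.toOuterMeasure_uniformOfFintype_apply]
  simp only [← Nat.card_eq_fintype_card]
  have hcards : Nat.card ↥(⇑e ⁻¹' S') = Nat.card ↥S' := by
    rw [Nat.card_congr (Equiv.image e (⇑e ⁻¹' S')), Equiv.image_preimage]
  have hbound := Sprime_bound T N q (2 ^ (n - m)) hT
  rw [hcardK] at hbound
  rw [hcards]
  have hdenom : Nat.card (Fin (N + q) → GaloisField 2 n) = (2 ^ n) ^ (N + q) := by
    rw [Nat.card_eq_fintype_card, Fintype.card_fun, Fintype.card_fin, hcardK]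
  rw [hdenom]
  -- pure arithmetic from here
  set c : ℕ := 2 ^ n
  set k : ℕ := 2 ^ (n - m)
  set D : ℕ := N * k
  set t : ℕ := c ^ N * (c - D) ^ q
  have hc0 : c ≠ 0 := by positivity
  have ht_le : t ≤ c ^ (N + q) := by
    calc t ≤ c ^ N * c ^ q := Nat.mul_le_mul_left _ (Nat.pow_le_pow_left (Nat.sub_le _ _) q)
      _ = c ^ (N + q) := (pow_add c N q).symm
  have hDc : D ≤ c := by
    have : c = 2 ^ m * k := by rw [← pow_add, Nat.add_sub_cancel' hmn]
    rw [this]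
    exact Nat.mul_le_mul_right _ hN2
  calc (Nat.card ↥S' : ℝ≥0∞) / ((2 ^ n : ℕ) ^ (N + q) : ℕ)
      ≤ ((c ^ (N + q) - t : ℕ) : ℝ≥0∞) / ((c ^ (N + q) : ℕ) : ℝ≥0∞) := by
        gcongr
        all_goals exact_mod_cast hbound
    _ = 1 - (t : ℝ≥0∞) / ((c ^ (N + q) : ℕ) : ℝ≥0∞) :=
        enn_div_sub _ _ ht_le (by positivity)
    _ = 1 - (1 - (N : ℝ≥0∞) / 2 ^ m) ^ q := by
        congr 1
        have h1 : (t : ℝ≥0∞) / ((c ^ (N + q) : ℕ) : ℝ≥0∞)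
            = (((c - D) ^ q : ℕ) : ℝ≥0∞) / ((c ^ q : ℕ) : ℝ≥0∞) := by
          have e1 : t = (c - D) ^ q * c ^ N := by rw [mul_comm]
          have e2 : c ^ (N + q) = c ^ q * c ^ N := by rw [← pow_add, Nat.add_comm]
          rw [e1, e2]
          exact enn_frac _ _ _ (by positivity)
        rw [h1]
        have h2 : (((c - D) ^ q : ℕ) : ℝ≥0∞) / ((c ^ q : ℕ) : ℝ≥0∞)
            = (((c - D : ℕ) : ℝ≥0∞) / ((c : ℕ) : ℝ≥0∞)) ^ q := by
          push_cast
          simp [div_eq_mul_inv, mul_pow, ENNReal.inv_pow]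
        rw [h2]
        congr 1
        have e3 : c - D = (2 ^ m - N) * k := by
          have : c = 2 ^ m * k := by rw [← pow_add, Nat.add_sub_cancel' hmn]
          rw [this, Nat.sub_mul]
        have e4 : c = 2 ^ m * k := by rw [← pow_add, Nat.add_sub_cancel' hmn]
        rw [e3]
        conv_lhs => rw [e4]
        rw [enn_frac _ _ _ (by positivity : k ≠ 0)]
        rw [enn_div_sub _ _ hN2 (by positivity)]
        push_cast
        ring_nf
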